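/- For the Heston-type gauge-free stochastic volatility model with σ(a) = η constant, the change of variable s = √2·a/η (so a(s) = ηs/√2) turns the reduced 1D eigenvalue problem into a Schrödinger equation whose potential is J(s) = (−3 + 4Bs²η + s⁴η²(2A + k²(ρ²−1)))/(4s²); in particular J(s) = −3/(4s²) + (Bη)·1 + (const)·s², a 3D-oscillator (harmonic-plus-inverse-square) potential. -/

import Mathlib

/-- Heston-type gauge-free model, σ(a) = η constant: with a(s) = ηs/√2, the
Liouville-transformed potential J(s) equals
(−3 + 4Bs²η + s⁴η²(2A + k²(ρ²−1)))/(4s²), a 3D-oscillator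
(harmonic-plus-inverse-square) potential. -/
theorem heston_potential (A B k ρ η : ℝ) (hη : 0 < η)
    (a σ J : ℝ → ℝ)
    (ha : ∀ s, a s = η * s / Real.sqrt 2)
    (hσ : ∀ x, σ x = η)
    (hJ : ∀ s, J s =
        (A * (a s)^2 + B * (σ (a s))^2 * deriv (fun x => x / σ x) (a s))
        - k^2 * (a s)^2 / 2
        + (4 * (a s)^4 * k^2 * ρ^2 - 3 * (σ (a s))^2
            + (a s)^2 * (deriv σ (a s))^2
            + 2 * (a s) * (σ (a s))
                * (deriv σ (a s) - (a s) * deriv (deriv σ) (a s)))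
          / (8 * (a s)^2)
        + (1/2) * (deriv (fun t => deriv (deriv a) t / deriv a t) s
            - (1/2) * (deriv (deriv a) s / deriv a s)^2)) :
    ∀ s : ℝ, 0 < s →
      J s = (-3 + 4 * B * s^2 * η + s^4 * η^2 * (2*A + k^2*(ρ^2 - 1))) / (4 * s^2)
      ∧ J s = -3 / (4 * s^2) + B * η + ((2*A + k^2*(ρ^2 - 1)) * η^2 / 4) * s^2 := by
  have hσf : σ = fun _ => η := funext hσ
  have haf : a = fun s => s * (η / Real.sqrt 2) := by
    funext s; rw [ha s]; ring
  have hs2 : (0:ℝ) < Real.sqrt 2 := Real.sqrt_pos.mpr (by norm_num)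
  have hs2sq : Real.sqrt 2 ^ 2 = 2 := Real.sq_sqrt (by norm_num)
  have hηne : η ≠ 0 := ne_of_gt hη
  have hdσ : deriv σ = fun _ => (0:ℝ) := by
    rw [hσf]; funext x; simp
  have hdivσ : (fun x => x / σ x) = fun x => x * η⁻¹ := by
    funext x; rw [hσ x, div_eq_mul_inv]
  have hdiva : deriv a = fun _ => η / Real.sqrt 2 := by
    rw [haf]; funext t; simp
  have hdda : deriv (deriv a) = fun _ => (0:ℝ) := by
    rw [hdiva]; funext t; simp
  intro s hs
  have hsne : s ≠ 0 := ne_of_gt hs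
  have hJs := hJ s
  rw [hdσ, hdda, hdivσ, hdiva, hσ, ha] at hJs
  simp only [deriv_mul_const_field, deriv_id'', deriv_const] at hJs
  have hane : η * s / Real.sqrt 2 ≠ 0 :=
    div_ne_zero (mul_ne_zero hηne hsne) (ne_of_gt hs2)
  constructor <;> rw [hJs] <;> field_simp <;> ring_nf <;>
    rw [show Real.sqrt 2 ^ 4 = (Real.sqrt 2 ^ 2) ^ 2 by ring, hs2sq] <;> ring
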